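/- Let m > 2q > 0 and s₀ = 2q²/(m - √(m² - 4q²)) be the larger root of 1 - m/r + q²/r² = 0. Define h : [0,∞) → [s₀,∞) as the inverse of F(r) = ∫_{s₀}^r (1 - m/ρ + q²/ρ²)^{-1/2} dρ. Then h'(t) = √(1 - m h(t)⁻¹ + q² h(t)⁻²), h(0) = s₀, h'(0) = 0, and the Reissner–Nordstrom warped metric dt² + h(t)²dω² satisfies K_tan(t) - K_rad(t) = (3m)/(2h(t)³) - 2q²/h(t)⁴. -/

import Mathlib

open Set MeasureTheory intervalIntegral


set_option maxHeartbeats 1600000 in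
/-- Reissner–Nordstrom: let `m > 2q > 0` and
`s₀ = 2q²/(m - √(m² - 4q²))` the larger root of `1 - m/r + q²/r² = 0`.  Define
`h : [0,∞) → [s₀,∞)` as the inverse of `F(r) = ∫_{s₀}^r (1 - m/ρ + q²/ρ²)^{-1/2} dρ`.
Then `h'(t) = √(1 - m h(t)⁻¹ + q² h(t)⁻²)`, `h(0) = s₀`, `h'(0) = 0`, and the
Reissner–Nordstrom warped metric `dt² + h(t)²dω²` satisfies
`K_tan(t) - K_rad(t) = (3m)/(2h(t)³) - 2q²/h(t)⁴`,
where `K_tan(t) = (1 - h'(t)²)/h(t)²` and `K_rad(t) = -h''(t)/h(t)`. -/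
theorem reissnerNordstrom_warping
    (m q s₀ : ℝ) (hq : 0 < q) (hmq : 2 * q < m)
    (hs₀ : s₀ = 2 * q ^ 2 / (m - Real.sqrt (m ^ 2 - 4 * q ^ 2)))
    (F h : ℝ → ℝ)
    (hF : ∀ r, F r = ∫ ρ in s₀..r, 1 / Real.sqrt (1 - m / ρ + q ^ 2 / ρ ^ 2))
    (hinv : ∀ r ∈ Set.Ioi s₀, h (F r) = r)
    (hdom : ∀ t ∈ Set.Ici (0 : ℝ), s₀ ≤ h t ∧ F (h t) = t)
    (hcont : ContinuousOn h (Set.Ici (0 : ℝ))) :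
    h 0 = s₀ ∧
    derivWithin h (Set.Ici 0) 0 = 0 ∧
    (∀ t ∈ Set.Ioi (0 : ℝ),
      deriv h t = Real.sqrt (1 - m / h t + q ^ 2 / (h t) ^ 2)) ∧
    (∀ t ∈ Set.Ioi (0 : ℝ),
      (1 - (deriv h t) ^ 2) / (h t) ^ 2 - (- (deriv (deriv h) t) / h t)
        = 3 * m / (2 * (h t) ^ 3) - 2 * q ^ 2 / (h t) ^ 4) := by
  -- ## roots
  set d := Real.sqrt (m ^ 2 - 4 * q ^ 2) with hd
  have hm0 : 0 < m := by linarith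
  have hD : 0 < m ^ 2 - 4 * q ^ 2 := by nlinarith
  have hd0 : 0 < d := Real.sqrt_pos.mpr hD
  have hd2 : d ^ 2 = m ^ 2 - 4 * q ^ 2 := Real.sq_sqrt hD.le
  have hdm : d < m := by nlinarith [Real.sqrt_nonneg (m ^ 2 - 4 * q ^ 2)]
  set s₁ : ℝ := (m - d) / 2 with hs₁
  have hs₁0 : 0 < s₁ := by rw [hs₁]; linarith
  have hs0' : s₀ = (m + d) / 2 := by
    rw [hs₀]; rw [div_eq_div_iff (by linarith) (by norm_num)]; nlinarith
  have h01 : s₁ < s₀ := by rw [hs0', hs₁]; linarith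
  have hs00 : 0 < s₀ := lt_trans hs₁0 h01
  have hsum : s₀ + s₁ = m := by rw [hs0', hs₁]; ring
  have hprod : s₀ * s₁ = q ^ 2 := by rw [hs0', hs₁]; nlinarith
  clear_value d s₁
  clear hd hs₁ hs₀ hs0' hd2 hd0 hdm hD
  -- ## the potential and the integrand
  set P : ℝ → ℝ := fun ρ => 1 - m / ρ + q ^ 2 / ρ ^ 2 with hP
  set f : ℝ → ℝ := fun ρ => 1 / Real.sqrt (P ρ) with hf
  have hFint : ∀ r, F r = ∫ ρ in s₀..r, f ρ := hF
  have hPform : ∀ ρ : ℝ, ρ ≠ 0 → P ρ = (ρ - s₀) * (ρ - s₁) / ρ ^ 2 := by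
    intro ρ hρ
    show 1 - m / ρ + q ^ 2 / ρ ^ 2 = (ρ - s₀) * (ρ - s₁) / ρ ^ 2
    field_simp
    linear_combination ρ * hsum - hprod
  have hPpos : ∀ ρ : ℝ, s₀ < ρ → 0 < P ρ := by
    intro ρ hρ
    have hρ0 : 0 < ρ := lt_trans hs00 hρ
    rw [hPform ρ (ne_of_gt hρ0)]
    have h1 : 0 < ρ - s₀ := by linarith
    have h2 : 0 < ρ - s₁ := by linarith
    positivity
  have hfmeas : Measurable f := by
    apply Measurable.div measurable_const
    exact (Real.continuous_sqrt.measurable).comp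
      ((measurable_const.sub (measurable_const.div measurable_id)).add
        (measurable_const.div (measurable_id.pow_const 2)))
  -- ## integrability of the integrand
  have hInt : ∀ r : ℝ, s₀ < r → IntervalIntegrable f volume s₀ r := by
    intro r hr
    have hr0 : 0 < r := lt_trans hs00 hr
    set C : ℝ := r / Real.sqrt (s₀ - s₁) with hC
    have hC0 : 0 < C := div_pos hr0 (Real.sqrt_pos.mpr (by linarith))
    have hg : IntervalIntegrable (fun ρ => C * (ρ - s₀) ^ (-(1/2) : ℝ)) volume s₀ r := by
      have h1 : IntervalIntegrable (fun x : ℝ => x ^ (-(1/2) : ℝ)) volume 0 (r - s₀) :=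
        intervalIntegral.intervalIntegrable_rpow' (by norm_num)
      have h2 := h1.comp_sub_right s₀
      simp only [zero_add] at h2
      have h3 : r - s₀ + s₀ = r := by ring
      rw [h3] at h2
      exact h2.const_mul C
    rw [intervalIntegrable_iff_integrableOn_Ioc_of_le hr.le]
    apply Integrable.mono ((intervalIntegrable_iff_integrableOn_Ioc_of_le hr.le).mp hg)
      (hfmeas.aestronglyMeasurable.restrict)
    rw [ae_restrict_iff' measurableSet_Ioc]
    filter_upwards with ρ hρ
    obtain ⟨hρ1, hρ2⟩ := hρ
    have hρ0 : 0 < ρ := lt_trans hs00 hρ1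
    have hPρ : 0 < P ρ := hPpos ρ hρ1
    have hfρ : 0 ≤ f ρ := by rw [hf]; positivity
    have hds : (0:ℝ) < ρ - s₀ := by linarith
    have hgρ : (ρ - s₀) ^ (-(1/2) : ℝ) = 1 / Real.sqrt (ρ - s₀) := by
      rw [one_div, Real.rpow_neg hds.le, Real.sqrt_eq_rpow]
      norm_num
    have hb : 1 / Real.sqrt (P ρ) ≤ C * (1 / Real.sqrt (ρ - s₀)) := by
      have hss : (0:ℝ) < s₀ - s₁ := by linarith
      rw [mul_one_div, div_le_div_iff₀ (Real.sqrt_pos.mpr hPρ) (Real.sqrt_pos.mpr hds), one_mul]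
      have key : ρ - s₀ ≤ (C * Real.sqrt (P ρ)) ^ 2 := by
        rw [mul_pow, Real.sq_sqrt hPρ.le, hC, div_pow,
          Real.sq_sqrt (by linarith : (0:ℝ) ≤ s₀ - s₁), hPform ρ (ne_of_gt hρ0),
          div_mul_div_comm, le_div_iff₀ (by positivity)]
        have e2 : ρ ^ 2 ≤ r ^ 2 := by nlinarith
        have e3 : (s₀ - s₁) * ρ ^ 2 ≤ (ρ - s₁) * r ^ 2 := by nlinarith
        nlinarith [mul_le_mul_of_nonneg_left e3 hds.le]
      calc Real.sqrt (ρ - s₀) ≤ Real.sqrt ((C * Real.sqrt (P ρ)) ^ 2) := Real.sqrt_le_sqrt key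
        _ = C * Real.sqrt (P ρ) := Real.sqrt_sq (by positivity)
    have hgnn : 0 ≤ C * (ρ - s₀) ^ (-(1/2) : ℝ) := by positivity
    rw [Real.norm_of_nonneg hfρ, Real.norm_of_nonneg hgnn, hgρ]
    exact hb
  -- ## positivity of F
  have hFpos : ∀ r : ℝ, s₀ < r → 0 < F r := by
    intro r hr
    rw [hFint r]
    apply intervalIntegral.intervalIntegral_pos_of_pos_on (hInt r hr) _ hr
    intro x hx
    have := hPpos x hx.1
    rw [hf]
    positivity
  -- ## h 0 = s₀
  have hFs₀ : F s₀ = 0 := by rw [hFint]; simp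
  have hh0 : h 0 = s₀ := by
    obtain ⟨h1, h2⟩ := hdom 0 Set.self_mem_Ici
    by_contra hne
    have : s₀ < h 0 := lt_of_le_of_ne h1 (Ne.symm hne)
    have := hFpos _ this
    rw [h2] at this
    exact lt_irrefl 0 this
  -- ## h t > s₀ for t > 0
  have hht : ∀ t : ℝ, 0 < t → s₀ < h t := by
    intro t ht
    obtain ⟨h1, h2⟩ := hdom t (Set.mem_Ici.mpr ht.le)
    rcases lt_or_eq_of_le h1 with h3 | h3
    · exact h3
    · exfalso; rw [← h3, hFs₀] at h2; linarith
  -- ## lower bound: F r ≥ 2 √s₀ √(r - s₀)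
  have hFlow : ∀ r : ℝ, s₀ < r →
      2 * Real.sqrt s₀ * Real.sqrt (r - s₀) ≤ F r := by
    intro r hr
    have hr0 : 0 < r := lt_trans hs00 hr
    -- the comparison function and its integral
    have hglow : IntervalIntegrable (fun ρ => Real.sqrt s₀ * (ρ - s₀) ^ (-(1/2) : ℝ))
        volume s₀ r := by
      have h1 : IntervalIntegrable (fun x : ℝ => x ^ (-(1/2) : ℝ)) volume 0 (r - s₀) :=
        intervalIntegral.intervalIntegrable_rpow' (by norm_num)
      have h2 := h1.comp_sub_right s₀
      simp only [zero_add] at h2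
      have h3 : r - s₀ + s₀ = r := by ring
      rw [h3] at h2
      exact h2.const_mul _
    have hval : ∫ ρ in s₀..r, Real.sqrt s₀ * (ρ - s₀) ^ (-(1/2) : ℝ)
        = 2 * Real.sqrt s₀ * Real.sqrt (r - s₀) := by
      rw [intervalIntegral.integral_const_mul]
      have h1 : ∫ ρ in s₀..r, (ρ - s₀) ^ (-(1/2) : ℝ)
          = ∫ x in (0:ℝ)..(r - s₀), x ^ (-(1/2) : ℝ) := by
        have := intervalIntegral.integral_comp_sub_right
          (fun x : ℝ => x ^ (-(1/2) : ℝ)) s₀ (a := s₀) (b := r)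
        simpa using this
      rw [h1, integral_rpow (Or.inl (by norm_num))]
      have h2 : (-(1/2) : ℝ) + 1 = 1/2 := by norm_num
      rw [h2, Real.zero_rpow (by norm_num), ← Real.sqrt_eq_rpow]
      ring
    rw [hFint r, ← hval]
    apply intervalIntegral.integral_mono_on hr.le hglow (hInt r hr)
    intro x hx
    obtain ⟨hx1, hx2⟩ := hx
    rcases eq_or_lt_of_le hx1 with he | hlt
    · -- endpoint: both sides vanish
      rw [← he]
      simp only [sub_self, Real.zero_rpow (by norm_num : (-(1/2):ℝ) ≠ 0), mul_zero, hf]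
      have : P s₀ = 0 := by
        rw [hPform s₀ (ne_of_gt hs00)]; simp
      rw [this, Real.sqrt_zero, div_zero]
    · have hx0 : 0 < x := lt_trans hs00 hlt
      have hPx : 0 < P x := hPpos x hlt
      have hds : (0:ℝ) < x - s₀ := by linarith
      have hgx : (x - s₀) ^ (-(1/2) : ℝ) = 1 / Real.sqrt (x - s₀) := by
        rw [one_div, Real.rpow_neg hds.le, Real.sqrt_eq_rpow]
        norm_num
      rw [hgx, hf, mul_one_div]
      show Real.sqrt s₀ / Real.sqrt (x - s₀) ≤ 1 / Real.sqrt (P x)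
      rw [div_le_div_iff₀ (Real.sqrt_pos.mpr hds) (Real.sqrt_pos.mpr hPx)]
      rw [one_mul, ← Real.sqrt_mul hs00.le]
      apply Real.sqrt_le_sqrt
      rw [hPform x (ne_of_gt hx0)]
      rw [show s₀ * ((x - s₀) * (x - s₁) / x ^ 2) = s₀ * ((x - s₀) * (x - s₁)) / x ^ 2
        from by ring, div_le_iff₀ (by positivity)]
      have e1 : s₀ * (x - s₁) ≤ x * x := by nlinarith
      nlinarith [mul_le_mul_of_nonneg_left e1 hds.le]
  -- ## FTC: derivative of F
  have hFderiv : ∀ r : ℝ, s₀ < r → HasDerivAt F (f r) r := by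
    intro r hr
    have hr0 : (0:ℝ) < r := lt_trans hs00 hr
    have hPr : 0 < P r := hPpos r hr
    have hcP : ContinuousAt P r := by
      apply ContinuousAt.add
      · exact continuousAt_const.sub (continuousAt_const.div continuousAt_id (ne_of_gt hr0))
      · exact continuousAt_const.div (continuousAt_id.pow 2) (by positivity)
    have hcf : ContinuousAt f r := by
      apply ContinuousAt.div continuousAt_const
        ((Real.continuous_sqrt.continuousAt).comp hcP)
      exact ne_of_gt (Real.sqrt_pos.mpr hPr)
    have h1 := intervalIntegral.integral_hasDerivAt_right (hInt r hr)
      (hfmeas.stronglyMeasurable.stronglyMeasurableAtFilter) hcf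
    exact h1.congr_of_eventuallyEq (Filter.Eventually.of_forall fun y => hFint y)
  -- ## derivative of h on Ioi 0
  have hhderiv : ∀ t : ℝ, 0 < t → HasDerivAt h (Real.sqrt (P (h t))) t := by
    intro t ht
    have hr := hht t ht
    have hPr : 0 < P (h t) := hPpos _ hr
    have hfne : f (h t) ≠ 0 := by
      rw [hf]; simp only; positivity
    have hca : ContinuousAt h t := hcont.continuousAt (Ici_mem_nhds ht)
    have hev : ∀ᶠ y in nhds t, F (h y) = y := by
      filter_upwards [Ici_mem_nhds ht] with y hy
      exact (hdom y hy).2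
    have h1 := HasDerivAt.of_local_left_inverse hca (hFderiv (h t) hr) hfne hev
    have h2 : (f (h t))⁻¹ = Real.sqrt (P (h t)) := by
      rw [hf]; simp only [one_div, inv_inv]
    rwa [h2] at h1
  refine ⟨hh0, ?_, ?_, ?_⟩
  · -- derivWithin h (Ici 0) 0 = 0
    have key : HasDerivWithinAt h 0 (Set.Ici 0) 0 := by
      rw [hasDerivWithinAt_iff_tendsto_slope, Set.Ici_sdiff_left]
      have hub : Filter.Tendsto (fun t : ℝ => t / (4 * s₀)) (nhdsWithin 0 (Set.Ioi 0))
          (nhds 0) := by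
        have h1 : Filter.Tendsto (fun t : ℝ => t / (4 * s₀)) (nhds 0)
            (nhds (0 / (4 * s₀))) := (continuous_id.div_const _).tendsto 0
        simpa using h1.mono_left nhdsWithin_le_nhds
      apply tendsto_of_tendsto_of_tendsto_of_le_of_le' tendsto_const_nhds hub
      · filter_upwards [self_mem_nhdsWithin] with t ht
        have ht0 : (0:ℝ) < t := ht
        have := (hdom t (Set.mem_Ici.mpr ht0.le)).1
        rw [slope_def_field, hh0]
        apply div_nonneg (by linarith) (by linarith)
      · filter_upwards [self_mem_nhdsWithin] with t ht
        have ht0 : (0:ℝ) < t := ht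
        have hle := hht t ht0
        have hlow := hFlow (h t) hle
        rw [(hdom t (Set.mem_Ici.mpr ht0.le)).2] at hlow
        rw [slope_def_field, hh0]
        have ha : (0:ℝ) ≤ Real.sqrt (h t - s₀) := Real.sqrt_nonneg _
        have hb : (0:ℝ) < Real.sqrt s₀ := Real.sqrt_pos.mpr hs00
        have ha2 : Real.sqrt (h t - s₀) ^ 2 = h t - s₀ := Real.sq_sqrt (by linarith)
        have hb2 : Real.sqrt s₀ ^ 2 = s₀ := Real.sq_sqrt hs00.le
        have hkey : (h t - s₀) * (4 * s₀) ≤ t ^ 2 := by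
          nlinarith [mul_nonneg (mul_nonneg (by norm_num : (0:ℝ) ≤ 2) hb.le) ha]
        rw [div_le_div_iff₀ (by linarith : (0:ℝ) < t - 0) (by positivity)]
        nlinarith [hkey]
    exact key.derivWithin (uniqueDiffOn_Ici 0 0 Set.self_mem_Ici)
  · intro t ht
    exact (hhderiv t ht).deriv
  · intro t ht
    have ht0 : (0:ℝ) < t := ht
    have hr := hht t ht0
    have hr0 : (0:ℝ) < h t := lt_trans hs00 hr
    have hPr : 0 < P (h t) := hPpos _ hr
    -- second derivative
    have hPder : HasDerivAt P (m / (h t) ^ 2 - 2 * q ^ 2 / (h t) ^ 3) (h t) := by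
      have h1 : HasDerivAt (fun ρ : ℝ => m / ρ)
          ((0 * h t - m * 1) / (h t) ^ 2) (h t) :=
        (hasDerivAt_const _ m).div (hasDerivAt_id _) (ne_of_gt hr0)
      have h2 : HasDerivAt (fun ρ : ℝ => q ^ 2 / ρ ^ 2)
          ((0 * (h t) ^ 2 - q ^ 2 * (2 * (h t) ^ 1)) / ((h t) ^ 2) ^ 2) (h t) :=
        (hasDerivAt_const _ (q ^ 2)).div (by simpa using hasDerivAt_pow 2 (h t))
          (by positivity)
      have h3 := ((hasDerivAt_const (h t) (1:ℝ)).sub h1).add h2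
      refine h3.congr_deriv ?_
      field_simp
      ring
    have hsder : HasDerivAt (fun y => Real.sqrt (P (h y)))
        ((m / (h t) ^ 2 - 2 * q ^ 2 / (h t) ^ 3) / 2) t := by
      have h1 := ((Real.hasDerivAt_sqrt (ne_of_gt hPr)).comp (h t) hPder).comp t
        (hhderiv t ht0)
      refine h1.congr_deriv ?_
      have hsq : Real.sqrt (P (h t)) ≠ 0 := ne_of_gt (Real.sqrt_pos.mpr hPr)
      field_simp [Function.comp]
    have hdd : deriv (deriv h) t = (m / (h t) ^ 2 - 2 * q ^ 2 / (h t) ^ 3) / 2 := by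
      have hEq : deriv h =ᶠ[nhds t] fun y => Real.sqrt (P (h y)) := by
        filter_upwards [Ioi_mem_nhds ht0] with y hy
        exact (hhderiv y hy).deriv
      rw [hEq.deriv_eq, hsder.deriv]
    rw [(hhderiv t ht0).deriv, hdd, Real.sq_sqrt hPr.le]
    show (1 - (1 - m / h t + q ^ 2 / (h t) ^ 2)) / (h t) ^ 2
      - (-((m / (h t) ^ 2 - 2 * q ^ 2 / (h t) ^ 3) / 2) / h t)
      = 3 * m / (2 * (h t) ^ 3) - 2 * q ^ 2 / (h t) ^ 4
    field_simp
    ring
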